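/- (Klee's Dehn–Sommerville relations for semi-Eulerian complexes, h-version.) Let Δ be a semi-Eulerian simplicial complex of dimension d−1 with h-numbers h_0, …, h_d. Then for every i with 0 ≤ i ≤ d: h_{d−i} − h_i = (−1)^i · binomial(d, i) · (χ̃(Δ) − (−1)^{d−1}). In particular, if Δ is Eulerian then h_{d−i} = h_i for all 0 ≤ i ≤ d. -/

import Mathlib

open Polynomial Finset

lemma neg_one_pow_congr' {a b : ℕ} (hab : a % 2 = b % 2) : (-1 : ℤ)^a = (-1)^b := by
  rw [neg_one_pow_eq_pow_mod_two, hab, ← neg_one_pow_eq_pow_mod_two]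

lemma one_sub_X_pow (m : ℕ) :
    ((1 - X : ℤ[X])) ^ m = ∑ k ∈ range (m+1), C ((-1)^k * (m.choose k : ℤ)) * X ^ k := by
  rw [sub_eq_add_neg, add_comm, add_pow]
  refine Finset.sum_congr rfl fun k _ => ?_
  rw [neg_pow, one_pow, mul_one]
  simp [C_mul, mul_comm, mul_assoc, mul_left_comm]

lemma coeff_one_sub_X_pow (m k : ℕ) :
    ((1 - X : ℤ[X]) ^ m).coeff k = if k ≤ m then (-1)^k * (m.choose k : ℤ) else 0 := by
  rw [one_sub_X_pow, finset_sum_coeff]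
  simp only [coeff_C_mul, coeff_X_pow, mul_ite, mul_one, mul_zero]
  rw [Finset.sum_ite_eq (range (m+1)) k]
  simp [Nat.lt_succ_iff]

lemma X_sub_one_pow (m : ℕ) :
    ((X - 1 : ℤ[X])) ^ m = C ((-1 : ℤ)^m) * (1 - X) ^ m := by
  have : (X - 1 : ℤ[X]) = -(1 - X) := by ring
  rw [this, neg_pow]
  simp

lemma coeff_hpoly (h : ℕ → ℤ) (d k : ℕ) (hk : k ≤ d) :
    (∑ i ∈ range (d+1), C (h i) * X^i : ℤ[X]).coeff k = h k := by
  rw [finset_sum_coeff]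
  simp only [coeff_C_mul, coeff_X_pow, mul_ite, mul_one, mul_zero]
  rw [Finset.sum_ite_eq (range (d+1)) k]
  simp [Nat.lt_succ_iff, hk]

lemma coeff_match {d i j : ℕ} (hi : i ≤ d) (hj : j ≤ d) :
    ((X - 1 : ℤ[X])^(d-j)).coeff i = ((X:ℤ[X])^j * (1-X)^(d-j)).coeff (d-i) := by
  rw [X_sub_one_pow, coeff_C_mul, coeff_one_sub_X_pow, mul_comm ((X:ℤ[X])^j),
    coeff_mul_X_pow', ]
  by_cases hij : i + j ≤ d
  · rw [if_pos (by omega : i ≤ d - j), if_pos (by omega : j ≤ d - i),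
      coeff_one_sub_X_pow, if_pos (by omega : d - i - j ≤ d - j)]
    have h1 : d - i - j = (d - j) - i := by omega
    rw [h1, Nat.choose_symm (by omega : i ≤ d - j)]
    rw [← mul_assoc, ← pow_add]
    congr 1
    exact neg_one_pow_congr' (by omega)
  · rw [if_neg (by omega : ¬ i ≤ d - j), if_neg (by omega : ¬ j ≤ d - i), mul_zero]

lemma sum_card_group {V : Type*} [DecidableEq V] (S : Finset (Finset V)) (d : ℕ)
    (hS : ∀ F ∈ S, F.card ≤ d) (g : ℕ → Polynomial ℤ) :
    ∑ j ∈ range (d+1), C (((S.filter fun F => F.card = j).card : ℤ)) * g j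
      = ∑ F ∈ S, g F.card := by
  rw [← Finset.sum_fiberwise_of_maps_to (g := fun F : Finset V => F.card) (t := range (d+1))
      (fun F hF => by simpa [Nat.lt_succ_iff] using hS F hF) (fun F => g F.card)]
  refine Finset.sum_congr rfl fun j _ => ?_
  rw [Finset.sum_congr rfl (fun F hF => by rw [(Finset.mem_filter.1 hF).2]),
    Finset.sum_const, nsmul_eq_mul]
  simp

lemma powerset_sum {V : Type*} [DecidableEq V] (G : Finset V) (d : ℕ) (hG : G.card ≤ d) :
    ∑ F ∈ G.powerset, (X : ℤ[X]) ^ F.card * (1 - X) ^ (d - F.card)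
      = (1 - X) ^ (d - G.card) := by
  rw [← sum_fiberwise_of_maps_to (g := fun F : Finset V => F.card) (t := range (G.card + 1))
      (fun F hF => by simpa [Nat.lt_succ_iff] using card_le_card (mem_powerset.1 hF)) _]
  have key : ∀ j ∈ range (G.card + 1),
      ∑ F ∈ (G.powerset.filter fun F => F.card = j), (X : ℤ[X]) ^ F.card * (1-X) ^ (d - F.card)
        = C ((G.card.choose j : ℤ)) * (X ^ j * (1-X) ^ (G.card - j)) * (1-X) ^ (d - G.card) := by
    intro j hj
    have hjG : j ≤ G.card := Nat.lt_succ_iff.1 (mem_range.1 hj)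
    rw [Finset.sum_congr rfl (fun F hF => by
      have h2 := (Finset.mem_filter.1 hF).2
      rw [h2]), Finset.sum_const, ← powersetCard_eq_filter, card_powersetCard, nsmul_eq_mul]
    have : d - j = (G.card - j) + (d - G.card) := by omega
    rw [this, pow_add, map_natCast C]
    ring
  rw [Finset.sum_congr rfl key, ← Finset.sum_mul]
  have : ∑ j ∈ range (G.card + 1), C ((G.card.choose j : ℤ)) * ((X:ℤ[X]) ^ j * (1-X) ^ (G.card - j)) = 1 := by
    have hp : (∑ j ∈ range (G.card + 1), C ((G.card.choose j : ℤ)) * ((X:ℤ[X]) ^ j * (1-X) ^ (G.card - j)))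
        = (X + (1 - X)) ^ G.card := by
      rw [add_pow]
      refine Finset.sum_congr rfl fun j _ => ?_
      rw [map_natCast C]
      ring
    rw [hp]
    simp
  rw [this, one_mul]

/-- A (finite, abstract) simplicial complex: a finite collection of finite subsets of `V`
containing the empty set and closed under taking subsets. -/
def IsSimplicialComplex {V : Type*} [DecidableEq V] (Δ : Finset (Finset V)) : Prop :=
  ∅ ∈ Δ ∧ ∀ F ∈ Δ, ∀ G ⊆ F, G ∈ Δ

/-- `Δ` has dimension `d - 1`: every face has at most `d` elements and some face has
exactly `d` elements. -/
def HasDimension {V : Type*} [DecidableEq V] (Δ : Finset (Finset V)) (d : ℕ) : Prop :=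
  (∀ F ∈ Δ, F.card ≤ d) ∧ ∃ F ∈ Δ, F.card = d

/-- `fnum Δ i` is the number of faces of `Δ` with exactly `i` elements, i.e. `f_{i-1}`. -/
def fnum {V : Type*} [DecidableEq V] (Δ : Finset (Finset V)) (i : ℕ) : ℕ :=
  (Δ.filter fun F => F.card = i).card

/-- The multiplicity `m_F = ∑_{G ∈ Δ, F ⊆ G} (−1)^{d−|G|}` of a face `F` of a complex of
dimension `d − 1` (all faces `G` satisfy `|G| ≤ d`, so `d - G.card` is the usual subtraction). -/
def mult {V : Type*} [DecidableEq V] (Δ : Finset (Finset V)) (d : ℕ) (F : Finset V) : ℤ :=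
  ∑ G ∈ Δ.filter (fun G => F ⊆ G), (-1 : ℤ) ^ (d - G.card)

/-- The reduced Euler characteristic `χ̃(Γ) = ∑_{G ∈ Γ} (−1)^{|G|−1}`; the exponent is
written `|G| + 1`, which has the same parity as `|G| − 1` (the empty face contributes `−1`). -/
def chiTilde {V : Type*} [DecidableEq V] (Γ : Finset (Finset V)) : ℤ :=
  ∑ G ∈ Γ, (-1 : ℤ) ^ (G.card + 1)

/-- The link of a face `F` in `Δ`. -/
def link {V : Type*} [DecidableEq V] (Δ : Finset (Finset V)) (F : Finset V) :
    Finset (Finset V) :=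
  Δ.filter fun G => G ∩ F = ∅ ∧ G ∪ F ∈ Δ

/-- `Δ` (of dimension `d − 1`) is reciprocal if `m_F ∈ {0, 1}` for every nonempty face. -/
def IsReciprocal {V : Type*} [DecidableEq V] (Δ : Finset (Finset V)) (d : ℕ) : Prop :=
  ∀ F ∈ Δ, F ≠ ∅ → mult Δ d F = 0 ∨ mult Δ d F = 1

/-- `Δ` (of dimension `d − 1`) is semi-Eulerian if `m_F = 1` for every nonempty face. -/
def IsSemiEulerian {V : Type*} [DecidableEq V] (Δ : Finset (Finset V)) (d : ℕ) : Prop :=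
  ∀ F ∈ Δ, F ≠ ∅ → mult Δ d F = 1

/-- `fint Δ d i` is the number of interior faces (nonempty faces with `m_F = 1`) of `Δ`
with exactly `i` elements, i.e. `f^int_{i-1}`. -/
def fint {V : Type*} [DecidableEq V] (Δ : Finset (Finset V)) (d : ℕ) (i : ℕ) : ℕ :=
  (Δ.filter fun F => F.card = i ∧ F ≠ ∅ ∧ mult Δ d F = 1).card

/-- Klee's Dehn–Sommerville relations for semi-Eulerian complexes, h-version:
`h_{d−i} − h_i = (−1)^i C(d,i) (χ̃(Δ) − (−1)^{d−1})`; the exponent `d + 1` has the same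
parity as `d − 1`. In particular, if `Δ` is Eulerian then `h_{d−i} = h_i`. -/
theorem DS_semiEulerian_h_version {V : Type*} [DecidableEq V] (Δ : Finset (Finset V)) (d : ℕ)
    (hd : 1 ≤ d) (hΔ : IsSimplicialComplex Δ) (hdim : HasDimension Δ d)
    (hse : IsSemiEulerian Δ d)
    (h : ℕ → ℤ)
    (hh : (∑ i ∈ range (d + 1), C (h i) * X ^ i : Polynomial ℤ)
        = ∑ i ∈ range (d + 1), C ((fnum Δ i : ℤ)) * X ^ i * (1 - X) ^ (d - i)) :
    (∀ i ≤ d,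
      h (d - i) - h i
        = (-1 : ℤ) ^ i * (d.choose i : ℤ) * (chiTilde Δ - (-1 : ℤ) ^ (d + 1)))
    ∧ (chiTilde Δ = (-1 : ℤ) ^ (d + 1) → ∀ i ≤ d, h (d - i) = h i) := by

  obtain ⟨hbound, -⟩ := hdim
  have stepB : ∑ G ∈ Δ, ((X : ℤ[X]) - 1) ^ (d - G.card)
      = ∑ F ∈ Δ, C (mult Δ d F) * (X ^ F.card * (1 - X) ^ (d - F.card)) := by
    have swap : ∑ F ∈ Δ, C (mult Δ d F) * (X ^ F.card * (1 - X) ^ (d - F.card))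
        = ∑ G ∈ Δ, ∑ F ∈ Δ, (if F ⊆ G then
            C ((-1:ℤ)^(d - G.card)) * ((X:ℤ[X]) ^ F.card * (1 - X) ^ (d - F.card)) else 0) := by
      rw [Finset.sum_comm]
      refine Finset.sum_congr rfl fun F _ => ?_
      rw [mult, map_sum, Finset.sum_mul, Finset.sum_filter]
    rw [swap]
    refine Finset.sum_congr rfl fun G hG => ?_
    rw [← Finset.sum_filter]
    have hfil : Δ.filter (fun F => F ⊆ G) = G.powerset := by
      ext F
      simp only [Finset.mem_filter, Finset.mem_powerset]
      exact ⟨fun hF => hF.2, fun hF => ⟨hΔ.2 G hG F hF, hF⟩⟩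
    rw [hfil, ← Finset.mul_sum, powerset_sum G d (hbound G hG), X_sub_one_pow]
  have stepC : ∑ F ∈ Δ, C (mult Δ d F) * ((X:ℤ[X]) ^ F.card * (1 - X) ^ (d - F.card))
      = (∑ F ∈ Δ, (X:ℤ[X]) ^ F.card * (1 - X) ^ (d - F.card))
        + C (mult Δ d ∅ - 1) * (1 - X) ^ d := by
    have hterm : ∀ F ∈ Δ, C (mult Δ d F) * ((X:ℤ[X]) ^ F.card * (1 - X) ^ (d - F.card))
        = (X:ℤ[X]) ^ F.card * (1 - X) ^ (d - F.card)
          + (if F = ∅ then C (mult Δ d ∅ - 1) * (1 - X) ^ d else 0) := by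
      intro F hF
      by_cases hF0 : F = ∅
      · subst hF0
        rw [if_pos rfl]
        simp only [Finset.card_empty, pow_zero, Nat.sub_zero, one_mul, map_sub, map_one]
        ring
      · rw [hse F hF hF0, if_neg hF0]
        simp
    rw [Finset.sum_congr rfl hterm, Finset.sum_add_distrib, Finset.sum_ite_eq' Δ ∅
      (fun _ => C (mult Δ d ∅ - 1) * (1 - X) ^ d), if_pos hΔ.1]
  have A1 : ∑ j ∈ range (d+1), C ((fnum Δ j : ℤ)) * ((X:ℤ[X]) - 1)^(d-j)
      = ∑ G ∈ Δ, ((X:ℤ[X]) - 1)^(d - G.card) :=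
    sum_card_group Δ d hbound _
  have A2 : ∑ j ∈ range (d+1), C ((fnum Δ j : ℤ)) * ((X:ℤ[X])^j * (1-X)^(d-j))
      = ∑ F ∈ Δ, (X:ℤ[X]) ^ F.card * (1 - X) ^ (d - F.card) :=
    sum_card_group Δ d hbound _
  have hh' : ∑ j ∈ range (d+1), C ((fnum Δ j : ℤ)) * ((X:ℤ[X])^j * (1-X)^(d-j))
      = ∑ i ∈ range (d + 1), C (h i) * X ^ i := by
    rw [hh]
    exact Finset.sum_congr rfl fun j _ => by ring
  have key : ∑ j ∈ range (d+1), C ((fnum Δ j : ℤ)) * ((X:ℤ[X]) - 1)^(d-j)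
      = (∑ i ∈ range (d + 1), C (h i) * X ^ i) + C (mult Δ d ∅ - 1) * (1 - X) ^ d := by
    rw [A1, stepB, stepC, ← A2, hh']
  have rel : ∀ i ≤ d,
      h (d - i) = h i + (mult Δ d ∅ - 1) * ((-1:ℤ)^i * (d.choose i : ℤ)) := by
    intro i hi
    have lhs_eq : (∑ j ∈ range (d+1), C ((fnum Δ j : ℤ)) * ((X:ℤ[X]) - 1)^(d-j)).coeff i
        = h (d - i) := by
      rw [finset_sum_coeff, Finset.sum_congr rfl (fun j hj => by
        rw [coeff_C_mul, coeff_match hi (Nat.lt_succ_iff.1 (mem_range.1 hj)), ← coeff_C_mul]),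
        ← finset_sum_coeff, hh', coeff_hpoly _ _ _ (by omega)]
    have rhs_eq : ((∑ i' ∈ range (d + 1), C (h i') * X ^ i')
          + C (mult Δ d ∅ - 1) * (1 - X) ^ d).coeff i
        = h i + (mult Δ d ∅ - 1) * ((-1:ℤ)^i * (d.choose i : ℤ)) := by
      rw [coeff_add, coeff_hpoly _ _ _ hi, coeff_C_mul, coeff_one_sub_X_pow, if_pos hi]
    rw [← lhs_eq, key, rhs_eq]
  have mval : mult Δ d ∅ = (-1:ℤ)^(d+1) * chiTilde Δ := by
    rw [mult, chiTilde, Finset.filter_true_of_mem (fun G _ => Finset.empty_subset G),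
      Finset.mul_sum]
    refine Finset.sum_congr rfl fun G hG => ?_
    have hc := hbound G hG
    rw [← pow_add]
    exact neg_one_pow_congr' (by omega)
  have sq : ((-1:ℤ)^(d+1)) * ((-1:ℤ)^(d+1)) = 1 := by
    rw [← pow_add]
    simpa using neg_one_pow_congr' (show (d+1+(d+1)) % 2 = 0 % 2 by omega)
  have e_eq : mult Δ d ∅ - 1 = (-1:ℤ)^(d+1) * (chiTilde Δ - (-1:ℤ)^(d+1)) := by
    rw [mval, mul_sub, sq]
  have rel' : ∀ i ≤ d, h (d - i) - h i
      = (-1:ℤ)^(d+1) * ((-1:ℤ)^i * (d.choose i : ℤ) * (chiTilde Δ - (-1:ℤ)^(d+1))) := by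
    intro i hi
    rw [rel i hi, e_eq]
    ring
  have c1 : ∀ i ≤ d, h (d - i) - h i
      = (-1:ℤ)^i * (d.choose i : ℤ) * (chiTilde Δ - (-1:ℤ)^(d+1)) := by
    rcases Nat.even_or_odd d with hev | hod
    · have p1 : (-1:ℤ)^(d+1) = -1 := Odd.neg_one_pow (Even.add_one hev)
      have pd : (-1:ℤ)^d = 1 := Even.neg_one_pow hev
      have r0 := rel' 0 (Nat.zero_le d)
      have rd := rel' d le_rfl
      simp only [Nat.sub_zero, pow_zero, Nat.choose_zero_right, Nat.choose_self,
        Nat.sub_self, Nat.cast_one, one_mul, mul_one, p1, pd] at r0 rd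
      have hE0 : chiTilde Δ - (-1:ℤ)^(d+1) = 0 := by
        rw [p1]
        linarith [r0, rd]
      intro i hi
      rw [rel' i hi, hE0]
      ring
    · have p1 : (-1:ℤ)^(d+1) = 1 := Even.neg_one_pow (Odd.add_one hod)
      intro i hi
      rw [rel' i hi, p1, one_mul]
  refine ⟨c1, fun hchi i hi => ?_⟩
  have := c1 i hi
  rw [hchi] at this
  simp at this
  linarith
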